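/- The lattice Λ = λℤ^d ⊕ λ̃ℤ^d with λᵀλ̃ = 2πℏ·I is maximal among subsets S of phase space satisfying ω(S,S) ⊆ 2πℏℤ: any vector X ∈ ℝ^{2d} with ω(X, K) ∈ 2πℏℤ for all K ∈ Λ must itself lie in Λ. -/

import Mathlib

open Matrix

/-- The modular lattice `Λ = λℤ^d ⊕ λ̃ℤ^d` (λ, λ̃ diagonal invertible,
`λᵀλ̃ = 2πℏ·1`) is maximal: any phase-space vector `X = (x, xt)` with
`ω(X, K) ∈ 2πℏℤ` for all lattice points `K` lies itself in the lattice. -/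
theorem modular_lattice_maximal
    {d : ℕ} (hd : 0 < d) (ℏ : ℝ) (hℏ : 0 < ℏ)
    (lam tlam : Matrix (Fin d) (Fin d) ℝ)
    (hlam : lam.IsDiag) (htlam : tlam.IsDiag)
    (hlamU : IsUnit lam) (htlamU : IsUnit tlam)
    (hpair : lamᵀ * tlam = (2 * Real.pi * ℏ) • (1 : Matrix (Fin d) (Fin d) ℝ))
    (x xt : Fin d → ℝ)
    (hcom : ∀ n nt : Fin d → ℤ, ∃ z : ℤ,
      xt ⬝ᵥ (lam.mulVec (fun i => (n i : ℝ)))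
        - x ⬝ᵥ (tlam.mulVec (fun i => (nt i : ℝ))) = 2 * Real.pi * ℏ * z) :
    ∃ n nt : Fin d → ℤ,
      x = lam.mulVec (fun i => (n i : ℝ)) ∧ xt = tlam.mulVec (fun i => (nt i : ℝ)) := by
  have hpi : (2 * Real.pi * ℏ) ≠ 0 := by positivity
  have hdiag : ∀ i, lam i i * tlam i i = 2 * Real.pi * ℏ := by
    intro i
    have h := congrFun (congrFun hpair i) i
    have h2 : (lamᵀ * tlam) i i = lam i i * tlam i i := by
      rw [Matrix.mul_apply,
        Finset.sum_eq_single_of_mem i (Finset.mem_univ i)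
          (fun b _ hb => by simp [Matrix.transpose_apply, hlam hb])]
      simp [Matrix.transpose_apply]
    rw [h2] at h
    simpa using h
  have hlne : ∀ i, lam i i ≠ 0 := fun i h => hpi (by rw [← hdiag i, h, zero_mul])
  have htne : ∀ i, tlam i i ≠ 0 := fun i h => hpi (by rw [← hdiag i, h, mul_zero])
  have hdot1 : ∀ (w : Fin d → ℝ) (M : Matrix (Fin d) (Fin d) ℝ), M.IsDiag → ∀ i,
      w ⬝ᵥ M.mulVec (fun j => ((Pi.single i 1 : Fin d → ℤ) j : ℝ)) = w i * M i i := by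
    intro w M hM i
    have hv : (fun j => (((Pi.single i 1 : Fin d → ℤ) j : ℤ) : ℝ)) = Pi.single i (1 : ℝ) := by
      ext j; simp [Pi.single_apply]
    rw [hv, Matrix.mulVec_single]
    simp only [dotProduct]
    rw [Finset.sum_eq_single_of_mem i (Finset.mem_univ i)
      (fun b _ hb => by simp [hM hb])]
    simp
  have hzero : ∀ (w : Fin d → ℝ) (M : Matrix (Fin d) (Fin d) ℝ),
      w ⬝ᵥ M.mulVec (fun j => (((0 : Fin d → ℤ) j : ℤ) : ℝ)) = 0 := by
    intro w M
    simp [Matrix.mulVec, dotProduct]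
  have hxt : ∀ i, ∃ z : ℤ, xt i = tlam i i * z := by
    intro i
    obtain ⟨z, hz⟩ := hcom (Pi.single i 1) 0
    refine ⟨z, ?_⟩
    rw [hdot1 xt lam hlam i, hzero x tlam, sub_zero, ← hdiag i] at hz
    exact mul_right_cancel₀ (hlne i)
      (by linarith [hz] : xt i * lam i i = tlam i i * z * lam i i)
  have hx : ∀ i, ∃ z : ℤ, x i = lam i i * z := by
    intro i
    obtain ⟨z, hz⟩ := hcom 0 (Pi.single i 1)
    refine ⟨-z, ?_⟩
    rw [hdot1 x tlam htlam i, hzero xt lam, zero_sub, ← hdiag i] at hz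
    have h2 : x i * tlam i i = lam i i * (-z : ℤ) * tlam i i := by
      push_cast
      nlinarith [hz]
    exact mul_right_cancel₀ (htne i) h2
  choose n hn using hx
  choose nt hnt using hxt
  refine ⟨n, nt, ?_, ?_⟩
  · funext i
    rw [hn i, Matrix.mulVec]
    simp only [dotProduct]
    rw [Finset.sum_eq_single_of_mem i (Finset.mem_univ i)
      (fun b _ hb => by simp [hlam (Ne.symm hb)])]
  · funext i
    rw [hnt i, Matrix.mulVec]
    simp only [dotProduct]
    rw [Finset.sum_eq_single_of_mem i (Finset.mem_univ i)
      (fun b _ hb => by simp [htlam (Ne.symm hb)])]
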